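/- For every β > β_0 > 1/2 (with p = 2), sup_{x ∈ η_2^{−1}((β,∞))} H_{β_0,2}(x) = sup_{x ∈ (m_*(β,2), 1]} H_{β_0,2}(x), where η_2^{−1}((β,∞)) = {t ∈ [−1,1] : η_2(t) > β}. -/

import Mathlib

open Real Set Filter

/-- `I(x) = ½[(1+x)log(1+x) + (1−x)log(1−x)]` (with `Real.log 0 = 0`). -/
noncomputable def bahI (x : ℝ) : ℝ :=
  ((1 + x) * Real.log (1 + x) + (1 - x) * Real.log (1 - x)) / 2

/-- `H_{β,p}(x) = β xᵖ − I(x)`. -/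
noncomputable def bahH (β : ℝ) (p : ℕ) (x : ℝ) : ℝ := β * x ^ p - bahI x

/-- `β*(p) = sup {β ≥ 0 : sup_{x∈[−1,1]} H_{β,p}(x) = 0}`. -/
noncomputable def betaStar (p : ℕ) : ℝ :=
  sSup {β : ℝ | 0 ≤ β ∧ sSup (bahH β p '' Set.Icc (-1 : ℝ) 1) = 0}

/-- inverse hyperbolic tangent. -/
noncomputable def arctanh (x : ℝ) : ℝ := Real.log ((1 + x) / (1 - x)) / 2

/-- `η_p(t) = p⁻¹ t^{1−p} arctanh t` for `t ≠ 0`, and `η_p(0) = 0`. -/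
noncomputable def etaFn (p : ℕ) (t : ℝ) : ℝ :=
  if t = 0 then 0 else (p : ℝ)⁻¹ * t ^ (1 - (p : ℤ)) * arctanh t

open Topology

lemma arctanh_neg (x : ℝ) : arctanh (-x) = - arctanh x := by
  unfold arctanh
  rw [show (1 + -x) / (1 - -x) = ((1 + x) / (1 - x))⁻¹ by rw [inv_div]; ring_nf,
    Real.log_inv]; ring

lemma arctanh_zero : arctanh 0 = 0 := by simp [arctanh]

lemma arctanh_one : arctanh 1 = 0 := by norm_num [arctanh]

lemma arctanh_eq {x : ℝ} (h1 : -1 < x) (h2 : x < 1) :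
    arctanh x = (Real.log (1 + x) - Real.log (1 - x)) / 2 := by
  rw [arctanh, Real.log_div (by linarith) (by linarith)]

lemma hasDerivAt_arctanh {x : ℝ} (h1 : -1 < x) (h2 : x < 1) :
    HasDerivAt arctanh (1 / (1 - x ^ 2)) x := by
  have hev : (fun y => (Real.log (1 + y) - Real.log (1 - y)) / 2) =ᶠ[nhds x] arctanh := by
    filter_upwards [Ioo_mem_nhds h1 h2] with y hy
    exact (arctanh_eq hy.1 hy.2).symm
  have d1 : HasDerivAt (fun y : ℝ => Real.log (1 + y)) (1 / (1 + x)) x := by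
    simpa [Function.comp_def] using ((Real.hasDerivAt_log (by linarith : (1:ℝ) + x ≠ 0)).comp x
      ((hasDerivAt_id x).const_add 1))
  have d2 : HasDerivAt (fun y : ℝ => Real.log (1 - y)) (-(1 / (1 - x))) x := by
    have := ((Real.hasDerivAt_log (by linarith : (1:ℝ) - x ≠ 0)).comp x
      ((hasDerivAt_id x).neg.const_add 1))
    simpa [mul_comm, Function.comp_def] using this
  have := ((d1.sub d2).div_const 2)
  have heq : (1 / (1 + x) - -(1 / (1 - x))) / 2 = 1 / (1 - x ^ 2) := by
    have h3 : (1:ℝ) - x ^ 2 ≠ 0 := by nlinarith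
    have h4 : (1:ℝ) + x ≠ 0 := by linarith
    have h5 : (1:ℝ) - x ≠ 0 := by linarith
    field_simp
    ring
  rw [heq] at this
  exact this.congr_of_eventuallyEq hev.symm

lemma bahI_neg (x : ℝ) : bahI (-x) = bahI x := by
  unfold bahI
  ring_nf

lemma bahH_neg (β : ℝ) (x : ℝ) : bahH β 2 (-x) = bahH β 2 x := by
  unfold bahH; rw [bahI_neg]; ring_nf

lemma continuous_bahI : Continuous bahI := by
  have h1 : Continuous fun x : ℝ => (1 + x) * Real.log (1 + x) :=
    Real.continuous_mul_log.comp (continuous_const.add continuous_id)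
  have h2 : Continuous fun x : ℝ => (1 - x) * Real.log (1 - x) :=
    Real.continuous_mul_log.comp (continuous_const.sub continuous_id)
  exact (h1.add h2).div_const 2

lemma continuous_bahH (β : ℝ) : Continuous (bahH β 2) :=
  ((continuous_const.mul (continuous_pow 2)).sub continuous_bahI)

lemma hasDerivAt_bahI {x : ℝ} (h1 : -1 < x) (h2 : x < 1) :
    HasDerivAt bahI (arctanh x) x := by
  have d1 : HasDerivAt (fun y : ℝ => (1 + y) * Real.log (1 + y))
      (Real.log (1 + x) + 1) x := by
    have := (Real.hasDerivAt_mul_log (by linarith : (1:ℝ) + x ≠ 0)).comp x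
      ((hasDerivAt_id x).const_add 1)
    simpa [Function.comp_def] using this
  have d2 : HasDerivAt (fun y : ℝ => (1 - y) * Real.log (1 - y))
      (-(Real.log (1 - x) + 1)) x := by
    have := (Real.hasDerivAt_mul_log (by linarith : (1:ℝ) - x ≠ 0)).comp x
      ((hasDerivAt_id x).neg.const_add 1)
    simpa [mul_comm, Function.comp_def] using this
  have := (d1.add d2).div_const 2
  have heq : (Real.log (1 + x) + 1 + -(Real.log (1 - x) + 1)) / 2 = arctanh x := by
    rw [arctanh_eq h1 h2]; ring
  rw [heq] at this
  exact this

lemma hasDerivAt_bahH (β : ℝ) {x : ℝ} (h1 : -1 < x) (h2 : x < 1) :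
    HasDerivAt (bahH β 2) (2 * β * x - arctanh x) x := by
  have d1 : HasDerivAt (fun y : ℝ => β * y ^ 2) (2 * β * x) x := by
    have := ((hasDerivAt_pow 2 x).const_mul β)
    exact this.congr_deriv (by norm_num; ring)
  exact d1.sub (hasDerivAt_bahI h1 h2)

lemma strictConvexOn_psi (β : ℝ) :
    StrictConvexOn ℝ (Ico (0:ℝ) 1) (fun t => arctanh t - 2 * β * t) := by
  apply StrictMonoOn.strictConvexOn_of_deriv (convex_Ico 0 1)
  · intro x hx
    exact ((hasDerivAt_arctanh (by linarith [hx.1] : (-1:ℝ) < x) hx.2).sub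
      (((hasDerivAt_id x).const_mul (2*β)))).continuousAt.continuousWithinAt
  · rw [interior_Ico]
    intro x hx y hy hxy
    have dx : deriv (fun t => arctanh t - 2 * β * t) x = 1 / (1 - x ^ 2) - 2 * β := by
      have := (hasDerivAt_arctanh (by linarith [hx.1] : (-1:ℝ) < x) hx.2).sub
        (((hasDerivAt_id x).const_mul (2*β)))
      simpa [Pi.sub_def] using this.deriv
    have dy : deriv (fun t => arctanh t - 2 * β * t) y = 1 / (1 - y ^ 2) - 2 * β := by
      have := (hasDerivAt_arctanh (by linarith [hy.1] : (-1:ℝ) < y) hy.2).sub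
        (((hasDerivAt_id y).const_mul (2*β)))
      simpa [Pi.sub_def] using this.deriv
    rw [dx, dy]
    have h1 : (0:ℝ) < 1 - y ^ 2 := by nlinarith [hy.2, hy.1]
    have h2 : 1 - y ^ 2 < 1 - x ^ 2 := by nlinarith [hx.1, hy.1, hxy]
    have : 1 / (1 - x ^ 2) < 1 / (1 - y ^ 2) := by
      apply one_div_lt_one_div_of_lt h1 h2
    linarith

lemma psi_pos (β m : ℝ) (hm0 : 0 < m) (hm1 : m < 1) (hcrit : arctanh m = 2 * β * m)
    {t : ℝ} (ht1 : m < t) (ht2 : t < 1) : 2 * β * t < arctanh t := by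
  have hconv := strictConvexOn_psi β
  have ht0 : 0 < t := lt_trans hm0 ht1
  have hbt : m / t < 1 := (div_lt_one ht0).2 ht1
  have hb0 : 0 < m / t := by positivity
  have key := hconv.2 (⟨le_refl 0, one_pos⟩ : (0:ℝ) ∈ Ico (0:ℝ) 1)
    (⟨le_of_lt ht0, ht2⟩ : t ∈ Ico (0:ℝ) 1) (ne_of_lt ht0)
    (by linarith : (0:ℝ) < 1 - m / t) hb0 (by ring)
  simp only [smul_eq_mul, mul_zero, zero_add] at key
  rw [show (m / t) * t = m from div_mul_cancel₀ m (ne_of_gt ht0), arctanh_zero] at key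
  rw [hcrit] at key
  have : 0 < (m / t) * (arctanh t - 2 * β * t) := by
    have : (1 - m / t) * (arctanh 0 - 2 * β * 0) = 0 := by rw [arctanh_zero]; ring
    nlinarith [key]
  nlinarith [this, hb0]

lemma psi_neg (β m : ℝ) (hm0 : 0 < m) (hm1 : m < 1) (hcrit : arctanh m = 2 * β * m)
    {t : ℝ} (ht1 : 0 < t) (ht2 : t < m) : arctanh t < 2 * β * t := by
  have hconv := strictConvexOn_psi β
  have hbt : t / m < 1 := (div_lt_one hm0).2 ht2
  have hb0 : 0 < t / m := by positivity
  have key := hconv.2 (⟨le_refl 0, one_pos⟩ : (0:ℝ) ∈ Ico (0:ℝ) 1)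
    (⟨le_of_lt hm0, hm1⟩ : m ∈ Ico (0:ℝ) 1) (ne_of_lt hm0)
    (by linarith : (0:ℝ) < 1 - t / m) hb0 (by ring)
  simp only [smul_eq_mul, mul_zero, zero_add] at key
  rw [show (t / m) * m = t from div_mul_cancel₀ t (ne_of_gt hm0), arctanh_zero] at key
  rw [hcrit] at key
  nlinarith [key]

lemma not_max_at_one (β : ℝ) (hβ : 0 < β) :
    ¬ IsMaxOn (bahH β 2) (Icc (-1:ℝ) 1) 1 := by
  intro hmax
  set E := Real.exp (4*β) with hE
  have hE1 : 1 < E := by rw [hE, show (1:ℝ) = Real.exp 0 from (Real.exp_zero).symm]; exact Real.exp_lt_exp.2 (by positivity)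
  set c := (E - 1)/(E + 1) with hc
  have hc0 : 0 < c := div_pos (by linarith) (by linarith)
  have hc1 : c < 1 := by rw [hc, div_lt_one (by linarith)]; linarith
  have hd : ∀ x ∈ interior (Icc c 1), deriv (bahH β 2) x < 0 := by
    rw [interior_Icc]
    intro x hx
    have hx0 : 0 < x := lt_trans hc0 hx.1
    have hx1 : x < 1 := hx.2
    rw [(hasDerivAt_bahH β (by linarith) hx1).deriv]
    have h1x : (0:ℝ) < 1 - x := by linarith
    have key : E < (1 + x) / (1 - x) := by
      rw [lt_div_iff₀ h1x]
      have : E - 1 < x * (E + 1) := by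
        have := (div_lt_iff₀ (by linarith : (0:ℝ) < E + 1)).1 hx.1
        linarith
      nlinarith
    have hlog : 4 * β < Real.log ((1 + x) / (1 - x)) := by
      have := Real.log_lt_log (by positivity) key
      rwa [hE, Real.log_exp] at this
    have : 2 * β < arctanh x := by rw [arctanh]; linarith
    nlinarith
  have anti := strictAntiOn_of_deriv_neg (convex_Icc c 1)
    ((continuous_bahH β).continuousOn) hd
  have hmem : (c + 1) / 2 ∈ Icc c 1 := ⟨by linarith, by linarith⟩
  have hlt := anti hmem (right_mem_Icc.2 (by linarith)) (by linarith)
  have := hmax (⟨by linarith, by linarith⟩ : (c + 1) / 2 ∈ Icc (-1:ℝ) 1)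
  simp only [mem_setOf_eq] at this
  linarith

lemma crit_eq (β m : ℝ) (hm0 : 0 < m) (hm1 : m < 1)
    (hmax : IsMaxOn (bahH β 2) (Icc (-1:ℝ) 1) m) : arctanh m = 2 * β * m := by
  have hloc : IsLocalMax (bahH β 2) m :=
    hmax.isLocalMax (Icc_mem_nhds (by linarith) hm1)
  have := hloc.deriv_eq_zero
  rw [(hasDerivAt_bahH β (by linarith) hm1).deriv] at this
  linarith

lemma etaFn_two (t : ℝ) (ht : t ≠ 0) : etaFn 2 t = 2⁻¹ * t⁻¹ * arctanh t := by
  rw [etaFn, if_neg ht]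
  norm_num

lemma etaFn_neg (t : ℝ) : etaFn 2 (-t) = etaFn 2 t := by
  rcases eq_or_ne t 0 with rfl | ht
  · norm_num
  · rw [etaFn_two _ (neg_ne_zero.2 ht), etaFn_two _ ht, arctanh_neg]
    field_simp

lemma eta_iff (β m : ℝ) (hβ : 1/2 < β) (hm0 : 0 < m) (hm1 : m < 1)
    (hcrit : arctanh m = 2 * β * m) {t : ℝ} (ht0 : 0 < t) (ht1 : t ≤ 1) :
    β < etaFn 2 t ↔ t ∈ Ioo m 1 := by
  rw [etaFn_two t (ne_of_gt ht0),
    show (2:ℝ)⁻¹ * t⁻¹ * arctanh t = arctanh t / (2 * t) by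
      field_simp, lt_div_iff₀ (by positivity : (0:ℝ) < 2 * t)]
  constructor
  · intro h
    rcases lt_or_eq_of_le ht1 with h1 | rfl
    · refine ⟨?_, h1⟩
      by_contra hle
      push_neg at hle
      rcases lt_or_eq_of_le hle with h2 | rfl
      · have := psi_neg β m hm0 hm1 hcrit ht0 h2
        nlinarith
      · nlinarith [hcrit]
    · rw [arctanh_one] at h
      nlinarith
  · rintro ⟨h1, h2⟩
    have := psi_pos β m hm0 hm1 hcrit h1 h2
    nlinarith

lemma set_eq (β m : ℝ) (hβ : 1/2 < β) (hm0 : 0 < m) (hm1 : m < 1)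
    (hcrit : arctanh m = 2 * β * m) :
    {t ∈ Icc (-1:ℝ) 1 | β < etaFn 2 t} = Ioo (-1:ℝ) (-m) ∪ Ioo m 1 := by
  ext t
  simp only [mem_setOf_eq, mem_Icc, mem_union, mem_Ioo]
  constructor
  · rintro ⟨⟨h1, h2⟩, hβt⟩
    rcases lt_trichotomy t 0 with ht | rfl | ht
    · left
      rw [← neg_neg t, etaFn_neg] at hβt
      have := (eta_iff β m hβ hm0 hm1 hcrit (by linarith) (by linarith)).1 hβt
      exact ⟨by linarith [this.2], by linarith [this.1]⟩
    · rw [etaFn, if_pos rfl] at hβt; linarith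
    · right
      exact (eta_iff β m hβ hm0 hm1 hcrit ht h2).1 hβt
  · rintro (⟨h1, h2⟩ | ⟨h1, h2⟩)
    · have hmem : -t ∈ Ioo m 1 := ⟨by linarith, by linarith⟩
      have := (eta_iff β m hβ hm0 hm1 hcrit (by linarith) (by linarith [hmem.2])).2 hmem
      rw [etaFn_neg] at this
      exact ⟨⟨by linarith, by linarith⟩, this⟩
    · exact ⟨⟨by linarith, by linarith⟩,
        (eta_iff β m hβ hm0 hm1 hcrit (by linarith) (by linarith)).2 ⟨h1, h2⟩⟩

lemma image_union_eq (β₀ m : ℝ) (hm0 : 0 < m) :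
    bahH β₀ 2 '' (Ioo (-1:ℝ) (-m) ∪ Ioo m 1) = bahH β₀ 2 '' Ioo m 1 := by
  rw [image_union]
  have : bahH β₀ 2 '' Ioo (-1:ℝ) (-m) = bahH β₀ 2 '' Ioo m 1 := by
    ext y
    simp only [mem_image, mem_Ioo]
    constructor
    · rintro ⟨x, ⟨hx1, hx2⟩, rfl⟩
      exact ⟨-x, ⟨by linarith, by linarith⟩, by rw [bahH_neg]⟩
    · rintro ⟨x, ⟨hx1, hx2⟩, rfl⟩
      exact ⟨-x, ⟨by linarith, by linarith⟩, by rw [bahH_neg]⟩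
  rw [this, union_self]

lemma sup_Ioo_eq_Ioc (β₀ m : ℝ) (hm1 : m < 1) :
    sSup (bahH β₀ 2 '' Ioo m 1) = sSup (bahH β₀ 2 '' Ioc m 1) := by
  have hbdd : BddAbove (bahH β₀ 2 '' Icc m 1) :=
    (isCompact_Icc.image (continuous_bahH β₀)).bddAbove
  have hbddo : BddAbove (bahH β₀ 2 '' Ioo m 1) :=
    hbdd.mono (image_mono Ioo_subset_Icc_self)
  have hbddc : BddAbove (bahH β₀ 2 '' Ioc m 1) :=
    hbdd.mono (image_mono Ioc_subset_Icc_self)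
  have hne : (Ioo m 1).Nonempty := nonempty_Ioo.2 hm1
  apply le_antisymm
  · exact csSup_le_csSup hbddc (hne.image _) (image_mono Ioo_subset_Ioc_self)
  · apply csSup_le ((nonempty_Ioc.2 hm1).image _)
    rintro y ⟨t, ht, rfl⟩
    rcases lt_or_eq_of_le ht.2 with h | h
    · exact le_csSup hbddo ⟨t, ⟨ht.1, h⟩, rfl⟩
    · subst h
      haveI : (𝓝[Ioo m 1] (1:ℝ)).NeBot := by
        rw [← mem_closure_iff_nhdsWithin_neBot, closure_Ioo (ne_of_lt hm1)]
        exact right_mem_Icc.2 hm1.le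
      have htend : Tendsto (bahH β₀ 2) (𝓝[Ioo m 1] 1) (𝓝 (bahH β₀ 2 1)) :=
        ((continuous_bahH β₀).tendsto 1).mono_left nhdsWithin_le_nhds
      refine le_of_tendsto htend ?_
      filter_upwards [self_mem_nhdsWithin] with x hx
      exact le_csSup hbddo ⟨x, hx, rfl⟩

/-- For `p = 2` and `β > β₀ > 1/2`, with `m = m_*(β,2)` the positive global maximizer of
`H_{β,2}` on `[−1,1]`:
`sup_{x ∈ η₂⁻¹((β,∞))} H_{β₀,2}(x) = sup_{x ∈ (m, 1]} H_{β₀,2}(x)`. -/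
theorem statement5 (β β₀ : ℝ) (h0 : 1 / 2 < β₀) (h1 : β₀ < β)
    (m : ℝ) (hm0 : 0 < m) (hm1 : m ∈ Set.Icc (-1 : ℝ) 1)
    (hmax : IsMaxOn (bahH β 2) (Set.Icc (-1 : ℝ) 1) m) :
    sSup (bahH β₀ 2 '' {t ∈ Set.Icc (-1 : ℝ) 1 | β < etaFn 2 t})
      = sSup (bahH β₀ 2 '' Set.Ioc m 1) := by
  have hβpos : 1/2 < β := lt_trans h0 h1
  have hm1' : m < 1 := by
    rcases lt_or_eq_of_le hm1.2 with h | h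
    · exact h
    · exact absurd (h ▸ hmax) (not_max_at_one β (by linarith))
  have hcrit := crit_eq β m hm0 hm1' hmax
  rw [set_eq β m hβpos hm0 hm1' hcrit, image_union_eq β₀ m hm0, sup_Ioo_eq_Ioc β₀ m hm1']
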